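/- Let f ∈ ℝ[X₁,…,Xₙ] be a polynomial with f(0) = 0 and ∇f(0) = 0. Suppose 𝒭 > 0 satisfies Condition 1, R is an isolation radius of 0, and R < 𝒭. Then 0 is a local maximizer of f if and only if f(x) < 0 for every x ∈ Γ_ℝ(f) ∩ S_R. -/

import Mathlib

open MvPolynomial Metric Set

noncomputable section

/-- The gradient of a real polynomial `f`, as a map on `ℝⁿ`. -/
def grad {n : ℕ} (f : MvPolynomial (Fin n) ℝ) (x : EuclideanSpace ℝ (Fin n)) :
    EuclideanSpace ℝ (Fin n) :=
  WithLp.toLp 2 (fun i => eval (fun j => x j) (pderiv i f))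

/-- Evaluation of a polynomial as a function on `ℝⁿ`. -/
def evalP {n : ℕ} (f : MvPolynomial (Fin n) ℝ) (x : EuclideanSpace ℝ (Fin n)) : ℝ :=
  eval (fun j => x j) f

/-- The tangency variety `Γ_ℝ(f) = {x | ∃ λ, ∇f(x) = λ x}`. -/
def Gamma {n : ℕ} (f : MvPolynomial (Fin n) ℝ) : Set (EuclideanSpace ℝ (Fin n)) :=
  {x | ∃ l : ℝ, grad f x = l • x}

/-- The set of real critical points `Crit_ℝ(f) = {x | ∇f(x) = 0}`. -/
def Crit {n : ℕ} (f : MvPolynomial (Fin n) ℝ) : Set (EuclideanSpace ℝ (Fin n)) :=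
  {x | grad f x = 0}

/-- Condition 1 for the radius `sR`: for every nonzero `u ∈ Γ_ℝ(f)` with `‖u‖ < sR`,
there exist a neighborhood `O ⊆ B_sR` of `u`, reals `a < t̄ < b` and a differentiable
map `φ : (a,b) → ℝⁿ` with `φ((a,b)) = Γ_ℝ(f) ∩ O`, `φ(t̄) = u`, and the derivative of
`t ↦ Σᵢ φᵢ(t)² = ‖φ(t)‖²` at `t̄` nonzero. -/
def Cond1 {n : ℕ} (f : MvPolynomial (Fin n) ℝ) (sR : ℝ) : Prop :=
  ∀ u ∈ Gamma f, u ≠ 0 → ‖u‖ < sR →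
    ∃ (O : Set (EuclideanSpace ℝ (Fin n))) (a b tb : ℝ)
      (φ : ℝ → EuclideanSpace ℝ (Fin n)),
      O ∈ nhds u ∧ O ⊆ closedBall (0 : EuclideanSpace ℝ (Fin n)) sR ∧
      a < tb ∧ tb < b ∧
      (∀ t ∈ Ioo a b, DifferentiableAt ℝ φ t) ∧
      φ '' Ioo a b = Gamma f ∩ O ∧ φ tb = u ∧
      deriv (fun t => ‖φ t‖ ^ 2) tb ≠ 0

def gradL {n : ℕ} (f : MvPolynomial (Fin n) ℝ) (x : EuclideanSpace ℝ (Fin n)) :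
    EuclideanSpace ℝ (Fin n) →L[ℝ] ℝ :=
  ∑ i, evalP (pderiv i f) x • (EuclideanSpace.proj i : EuclideanSpace ℝ (Fin n) →L[ℝ] ℝ)

lemma gradL_apply {n : ℕ} (f : MvPolynomial (Fin n) ℝ) (x v : EuclideanSpace ℝ (Fin n)) :
    gradL f x v = ∑ i, evalP (pderiv i f) x * v i := by
  simp [gradL]

lemma evalP_mul_X {n : ℕ} (p : MvPolynomial (Fin n) ℝ) (i : Fin n)
    (x : EuclideanSpace ℝ (Fin n)) : evalP (p * X i) x = evalP p x * x i := by
  simp [evalP]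

lemma gradL_mul_X {n : ℕ} (p : MvPolynomial (Fin n) ℝ) (i : Fin n)
    (x : EuclideanSpace ℝ (Fin n)) :
    gradL (p * X i) x = evalP p x • (EuclideanSpace.proj i : EuclideanSpace ℝ (Fin n) →L[ℝ] ℝ)
      + x i • gradL p x := by
  ext v
  simp only [gradL_apply, ContinuousLinearMap.add_apply, ContinuousLinearMap.smul_apply,
    PiLp.proj_apply, smul_eq_mul]
  have : ∀ j, evalP (pderiv j (p * X i)) x
      = evalP (pderiv j p) x * x i + (if i = j then evalP p x else 0) := by
    intro j
    rw [pderiv_mul]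
    simp only [evalP, map_add, eval_mul, eval_X]
    congr 1
    rcases eq_or_ne i j with h | h
    · subst h; simp
    · simp [pderiv_X_of_ne (Ne.symm h), h]
  simp only [this, add_mul, Finset.sum_add_distrib, ite_mul, zero_mul]
  rw [Finset.sum_ite_eq (Finset.univ) i (fun j => evalP p x * v j)]
  simp only [Finset.mem_univ, if_true, Finset.mul_sum]
  rw [add_comm]
  congr 1
  apply Finset.sum_congr rfl
  intro j _
  ring

lemma hasFDerivAt_evalP {n : ℕ} (f : MvPolynomial (Fin n) ℝ) (x : EuclideanSpace ℝ (Fin n)) :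
    HasFDerivAt (evalP f) (gradL f x) x := by
  induction f using MvPolynomial.induction_on with
  | C a =>
      have h1 : evalP (C a : MvPolynomial (Fin n) ℝ) = fun _ => a := by
        funext y; simp [evalP]
      have h2 : gradL (C a : MvPolynomial (Fin n) ℝ) x = 0 := by
        ext v; simp [gradL_apply, evalP, pderiv_C]
      rw [h1, h2]; exact hasFDerivAt_const a x
  | add p q hp hq =>
      have h1 : evalP (p + q) = fun y => evalP p y + evalP q y := by
        funext y; simp [evalP]
      have h2 : gradL (p + q) x = gradL p x + gradL q x := by
        ext v
        simp [gradL_apply, evalP, map_add, Finset.sum_add_distrib, add_mul]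
      rw [h1, h2]; exact hp.add hq
  | mul_X p i hp =>
      have h1 : evalP (p * X i) = fun y => evalP p y * y i := by
        funext y; exact evalP_mul_X p i y
      rw [h1, gradL_mul_X]
      have hproj : HasFDerivAt (fun y : EuclideanSpace ℝ (Fin n) => y i)
          (EuclideanSpace.proj i : EuclideanSpace ℝ (Fin n) →L[ℝ] ℝ) x :=
        (EuclideanSpace.proj i : EuclideanSpace ℝ (Fin n) →L[ℝ] ℝ).hasFDerivAt
      have := hp.mul hproj
      exact this

lemma contDiff_evalP {n : ℕ} (f : MvPolynomial (Fin n) ℝ) : ContDiff ℝ ⊤ (evalP f) := by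
  induction f using MvPolynomial.induction_on with
  | C a =>
      have h1 : evalP (C a : MvPolynomial (Fin n) ℝ) = fun _ => a := by
        funext y; simp [evalP]
      rw [h1]; exact contDiff_const
  | add p q hp hq =>
      have h1 : evalP (p + q) = fun y => evalP p y + evalP q y := by
        funext y; simp [evalP]
      rw [h1]; exact hp.add hq
  | mul_X p i hp =>
      have h1 : evalP (p * X i) = fun y => evalP p y * y i := by
        funext y; exact evalP_mul_X p i y
      rw [h1]
      exact hp.mul (EuclideanSpace.proj i : EuclideanSpace ℝ (Fin n) →L[ℝ] ℝ).contDiff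

lemma continuous_evalP {n : ℕ} (f : MvPolynomial (Fin n) ℝ) : Continuous (evalP f) :=
  (contDiff_evalP f).continuous

lemma differentiable_evalP {n : ℕ} (f : MvPolynomial (Fin n) ℝ) :
    Differentiable ℝ (evalP f) := fun x => (hasFDerivAt_evalP f x).differentiableAt

lemma hasStrictFDerivAt_evalP {n : ℕ} (f : MvPolynomial (Fin n) ℝ)
    (x : EuclideanSpace ℝ (Fin n)) : HasStrictFDerivAt (evalP f) (gradL f x) x := by
  have h := ((contDiff_evalP f).contDiffAt (x := x)).hasStrictFDerivAt (by simp)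
  rwa [(hasFDerivAt_evalP f x).fderiv] at h

lemma gradL_eq_inner {n : ℕ} (f : MvPolynomial (Fin n) ℝ) (x v : EuclideanSpace ℝ (Fin n)) :
    gradL f x v = inner ℝ (grad f x) v := by
  rw [gradL_apply, PiLp.inner_apply]
  apply Finset.sum_congr rfl
  intro i _
  simp [grad, evalP, mul_comm]

lemma grad_apply {n : ℕ} (f : MvPolynomial (Fin n) ℝ) (x : EuclideanSpace ℝ (Fin n)) (i : Fin n) :
    grad f x i = evalP (pderiv i f) x := rfl

lemma grad_eq_zero_of_isLocalMax {n : ℕ} {f : MvPolynomial (Fin n) ℝ}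
    {x : EuclideanSpace ℝ (Fin n)} (h : IsLocalMax (evalP f) x) : grad f x = 0 := by
  have h0 : fderiv ℝ (evalP f) x = 0 := h.fderiv_eq_zero
  rw [(hasFDerivAt_evalP f x).fderiv] at h0
  ext i
  have := congrArg (fun L : EuclideanSpace ℝ (Fin n) →L[ℝ] ℝ =>
    L (EuclideanSpace.single i 1)) h0
  simp only [gradL_apply, ContinuousLinearMap.zero_apply] at this
  have hsum : ∑ j, evalP (pderiv j f) x * (EuclideanSpace.single i (1:ℝ)) j
      = evalP (pderiv i f) x := by
    rw [Finset.sum_eq_single i]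
    · simp
    · intro j _ hj; simp [EuclideanSpace.single_apply, hj]
    · simp
  rw [hsum] at this
  exact this

lemma grad_eq_zero_of_isMaxOn_mem_interior {n : ℕ} {f : MvPolynomial (Fin n) ℝ}
    {s : Set (EuclideanSpace ℝ (Fin n))} {x : EuclideanSpace ℝ (Fin n)}
    (h : IsMaxOn (evalP f) s x) (hs : s ∈ nhds x) : grad f x = 0 :=
  grad_eq_zero_of_isLocalMax (h.isLocalMax hs)

/-- Lagrange multipliers on the sphere. -/
lemma mem_Gamma_of_isMaxOn_sphere {n : ℕ} {f : MvPolynomial (Fin n) ℝ}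
    {x : EuclideanSpace ℝ (Fin n)} {r : ℝ} (hr : 0 < r) (hx : ‖x‖ = r)
    (h : ∀ y : EuclideanSpace ℝ (Fin n), ‖y‖ = r → evalP f y ≤ evalP f x) :
    ∃ l : ℝ, grad f x = l • x := by
  have hx0 : x ≠ 0 := by
    intro h0; rw [h0, norm_zero] at hx; exact hr.ne hx
  -- constraint function G y = ‖y‖^2
  have hextr : IsLocalExtrOn (evalP f) {y | ‖y‖^2 = ‖x‖^2} x := by
    refine Or.inr (eventually_nhdsWithin_of_forall ?_)
    intro y hy
    have h2 : ‖y‖^2 = r^2 := by rw [Set.mem_setOf_eq.mp hy, hx]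
    have hfac : (‖y‖ - r) * (‖y‖ + r) = 0 := by linear_combination h2
    rcases mul_eq_zero.mp hfac with h3 | h3
    · exact h y (by linarith)
    · have := norm_nonneg y; linarith
  obtain ⟨a, b, hab, heq⟩ := hextr.exists_multipliers_of_hasStrictFDerivAt_1d
    (hasStrictFDerivAt_norm_sq x) (hasStrictFDerivAt_evalP f x)
  have hb : b ≠ 0 := by
    intro hb0
    apply hab
    subst hb0
    simp only [zero_smul, add_zero] at heq
    have := congrArg (fun L : EuclideanSpace ℝ (Fin n) →L[ℝ] ℝ => L x) heq
    simp only [ContinuousLinearMap.smul_apply, ContinuousLinearMap.zero_apply,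
      smul_eq_mul, nsmul_eq_mul] at this
    have hxx : (innerSL ℝ x) x = ‖x‖^2 := real_inner_self_eq_norm_sq x
    have hxpos : (0:ℝ) < ‖x‖ := norm_pos_iff.mpr hx0
    have hx2 : (0:ℝ) < ‖x‖^2 := pow_pos hxpos 2
    have ha : a = 0 := by
      rw [hxx] at this
      push_cast at this
      nlinarith
    simp [ha]
  refine ⟨-(2*a)/b, ?_⟩
  have key : ∀ v : EuclideanSpace ℝ (Fin n),
      inner ℝ (b • grad f x + (2*a) • x) v = (0:ℝ) := by
    intro v
    have hv := congrArg (fun L : EuclideanSpace ℝ (Fin n) →L[ℝ] ℝ => L v) heq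
    simp only [ContinuousLinearMap.add_apply, ContinuousLinearMap.smul_apply,
      ContinuousLinearMap.zero_apply, smul_eq_mul, nsmul_eq_mul] at hv
    rw [inner_add_left, real_inner_smul_left, real_inner_smul_left, ← gradL_eq_inner]
    have hinner : ((innerSL ℝ) x) v = (inner ℝ x v : ℝ) := rfl
    rw [hinner] at hv
    push_cast at hv
    linarith [hv]
  have hz : b • grad f x + (2*a) • x = 0 :=
    inner_self_eq_zero.mp (key (b • grad f x + (2*a) • x))
  have h1 : b • grad f x = (-(2*a)) • x := by
    rw [neg_smul]
    exact eq_neg_of_add_eq_zero_left hz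
  calc grad f x = (1/b) • (b • grad f x) := by
        rw [smul_smul]; rw [one_div, inv_mul_cancel₀ hb, one_smul]
    _ = (1/b) • ((-(2*a)) • x) := by rw [h1]
    _ = (-(2*a)/b) • x := by rw [smul_smul]; congr 1; field_simp

/-- If `g` has positive derivative at `t`, then `g s < g t` for `s` slightly to the left. -/
lemma eventually_lt_left_of_deriv_pos {g : ℝ → ℝ} {t d : ℝ} (h : HasDerivAt g d t)
    (hd : 0 < d) : ∀ᶠ s in nhdsWithin t (Iio t), g s < g t := by
  have hs := hasDerivAt_iff_tendsto_slope.mp h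
  have h1 : ∀ᶠ s in nhdsWithin t {t}ᶜ, 0 < slope g t s := hs (Ioi_mem_nhds hd)
  have h2 : ∀ᶠ s in nhdsWithin t (Iio t), 0 < slope g t s :=
    (h1.filter_mono (nhdsWithin_mono t (fun s hs => ne_of_lt hs)))
  filter_upwards [h2, self_mem_nhdsWithin] with s hs1 hs2
  have hst : s - t < 0 := sub_neg.mpr hs2
  rw [slope_def_field] at hs1
  have := (div_pos_iff).mp hs1
  rcases this with ⟨h3, h4⟩ | ⟨h3, h4⟩
  · linarith
  · linarith

/-- If `g` has negative derivative at `t`, then `g s < g t` for `s` slightly to the right. -/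
lemma eventually_lt_right_of_deriv_neg {g : ℝ → ℝ} {t d : ℝ} (h : HasDerivAt g d t)
    (hd : d < 0) : ∀ᶠ s in nhdsWithin t (Ioi t), g s < g t := by
  have hs := hasDerivAt_iff_tendsto_slope.mp h
  have h1 : ∀ᶠ s in nhdsWithin t {t}ᶜ, slope g t s < 0 := hs (Iio_mem_nhds hd)
  have h2 : ∀ᶠ s in nhdsWithin t (Ioi t), slope g t s < 0 :=
    (h1.filter_mono (nhdsWithin_mono t (fun s hs => ne_of_gt hs)))
  filter_upwards [h2, self_mem_nhdsWithin] with s hs1 hs2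
  have hst : 0 < s - t := sub_pos.mpr hs2
  rw [slope_def_field] at hs1
  have := (div_neg_iff).mp hs1
  rcases this with ⟨h3, h4⟩ | ⟨h3, h4⟩
  · linarith
  · linarith

/-- If `g` has negative derivative at `t`, then `g s > g t` for `s` slightly to the left. -/
lemma eventually_gt_left_of_deriv_neg {g : ℝ → ℝ} {t d : ℝ} (h : HasDerivAt g d t)
    (hd : d < 0) : ∀ᶠ s in nhdsWithin t (Iio t), g t < g s := by
  have := eventually_lt_left_of_deriv_pos (h.neg) (by linarith : 0 < -d)
  filter_upwards [this] with s hs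
  simpa using hs

lemma continuous_grad {n : ℕ} (f : MvPolynomial (Fin n) ℝ) : Continuous (grad f) := by
  have h1 : Continuous (fun x : EuclideanSpace ℝ (Fin n) => fun i : Fin n =>
      evalP (pderiv i f) x) := continuous_pi (fun i => continuous_evalP _)
  exact (PiLp.continuousLinearEquiv 2 ℝ (fun _ : Fin n => ℝ)).symm.continuous.comp h1

lemma isClosed_Gamma {n : ℕ} (f : MvPolynomial (Fin n) ℝ) (hgrad : grad f 0 = 0) :
    IsClosed (Gamma f) := by
  have heq : Gamma f = {x : EuclideanSpace ℝ (Fin n) |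
      (inner ℝ (grad f x) x : ℝ) • x - (‖x‖^2) • grad f x = 0} := by
    ext x
    constructor
    · rintro ⟨l, hl⟩
      simp only [Set.mem_setOf_eq, hl]
      rw [real_inner_smul_left, real_inner_self_eq_norm_sq, smul_smul, mul_comm]
      exact sub_self _
    · intro hx
      rcases eq_or_ne x 0 with rfl | hx0
      · exact ⟨0, by rw [hgrad, zero_smul]⟩
      · have hx2 : (0:ℝ) < ‖x‖^2 := pow_pos (norm_pos_iff.mpr hx0) 2
        have h0 : (inner ℝ (grad f x) x : ℝ) • x = (‖x‖^2) • grad f x := sub_eq_zero.mp hx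
        have h1 := congrArg (fun y => ((‖x‖^2)⁻¹ : ℝ) • y) h0
        simp only [smul_smul] at h1
        rw [inv_mul_cancel₀ (ne_of_gt hx2), one_smul] at h1
        exact ⟨(‖x‖^2)⁻¹ * (inner ℝ (grad f x) x : ℝ), h1.symm⟩

  rw [heq]
  have hcont : Continuous (fun x : EuclideanSpace ℝ (Fin n) =>
      (inner ℝ (grad f x) x : ℝ) • x - (‖x‖^2) • grad f x) := by
    apply Continuous.sub
    · exact (((continuous_grad f).inner (𝕜 := ℝ) continuous_id)).smul continuous_id
    · exact ((continuous_norm.pow 2)).smul (continuous_grad f)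
  exact isClosed_eq hcont continuous_const

lemma isCompact_connectedComponentIn {E : Type*} [TopologicalSpace E] [T2Space E]
    {F : Set E} (hF : IsCompact F) {x : E} (hx : x ∈ F) :
    IsCompact (connectedComponentIn F x) := by
  rw [connectedComponentIn_eq_image hx]
  have : CompactSpace F := isCompact_iff_compactSpace.mp hF
  exact (isClosed_connectedComponent.isCompact).image continuous_subtype_val

lemma hasDerivAt_evalP_comp {n : ℕ} (f : MvPolynomial (Fin n) ℝ)
    {φ : ℝ → EuclideanSpace ℝ (Fin n)} {φ' : EuclideanSpace ℝ (Fin n)} {t : ℝ}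
    (hφ : HasDerivAt φ φ' t) :
    HasDerivAt (fun s => evalP f (φ s)) (inner ℝ (grad f (φ t)) φ' : ℝ) t := by
  have h := (hasFDerivAt_evalP f (φ t)).comp_hasDerivAt t hφ
  have : gradL f (φ t) φ' = (inner ℝ (grad f (φ t)) φ' : ℝ) := gradL_eq_inner f (φ t) φ'
  rwa [this] at h

set_option maxHeartbeats 1000000 in
/-- If `sR > 0` satisfies Condition 1, `R` is an isolation radius of `0`, and
`R < sR`, then `0` is a local maximizer of `f` if and only if `f(x) < 0` for every `x ∈ Γ_ℝ(f) ∩ S_R`. -/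
theorem stmt15 (n : ℕ) (f : MvPolynomial (Fin n) ℝ)
    (hf0 : evalP f 0 = 0) (hgrad : grad f 0 = 0)
    (sR : ℝ) (hsR : 0 < sR) (hcond : Cond1 f sR) (R : ℝ) (hR : 0 < R)
    (hiso : Crit f ∩ closedBall (0 : EuclideanSpace ℝ (Fin n)) R = {0}) (hRlt : R < sR) :
    IsLocalMax (evalP f) 0 ↔
      ∀ x ∈ Gamma f ∩ sphere (0 : EuclideanSpace ℝ (Fin n)) R, evalP f x < 0 := by
  have hcrit : ∀ y : EuclideanSpace ℝ (Fin n), grad f y = 0 → ‖y‖ ≤ R → y = 0 := by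
    intro y hy hyR
    have : y ∈ Crit f ∩ closedBall (0 : EuclideanSpace ℝ (Fin n)) R :=
      ⟨hy, mem_closedBall_zero_iff.mpr hyR⟩
    rw [hiso] at this
    exact this
  constructor
  · intro hmax
    rintro x ⟨hxG, hxS⟩
    by_contra hge
    push_neg at hge
    have hxnorm : ‖x‖ = R := mem_sphere_zero_iff_norm.mp hxS
    -- Step 1: a punctured ball where f is strictly negative
    obtain ⟨e0, he0pos, he0R, hball0⟩ : ∃ e0 : ℝ, 0 < e0 ∧ e0 ≤ R ∧
        ∀ y ∈ ball (0 : EuclideanSpace ℝ (Fin n)) e0, evalP f y ≤ 0 := by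
      have h1 : {y : EuclideanSpace ℝ (Fin n) | evalP f y ≤ 0} ∈ nhds
          (0 : EuclideanSpace ℝ (Fin n)) := by
        have := hmax
        rw [IsLocalMax, IsMaxFilter] at this
        simp only [hf0] at this
        exact this
      obtain ⟨d, hdpos, hdsub⟩ := Metric.mem_nhds_iff.mp h1
      exact ⟨min d R, lt_min hdpos hR, min_le_right d R,
        fun y hy => hdsub (mem_ball_zero_iff.mpr (lt_of_lt_of_le (mem_ball_zero_iff.mp hy) (min_le_left d R)))⟩
    set ep : ℝ := e0 / 2 with hep_def
    have hep_pos : 0 < ep := by positivity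
    have hep_lt_e0 : ep < e0 := by simp only [hep_def]; linarith
    have hep_le_R : ep ≤ R := by simp only [hep_def]; linarith
    have step1 : ∀ y : EuclideanSpace ℝ (Fin n), y ≠ 0 → ‖y‖ ≤ ep → evalP f y < 0 := by
      intro y hy0 hye
      rcases lt_or_ge (evalP f y) 0 with h | h
      · exact h
      have hyle : evalP f y ≤ 0 := hball0 y (mem_ball_zero_iff.mpr (lt_of_le_of_lt hye hep_lt_e0))
      have hy_eq : evalP f y = 0 := le_antisymm hyle h
      exfalso
      have hylm : IsLocalMax (evalP f) y := by
        apply Filter.eventually_of_mem (isOpen_ball.mem_nhds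
          (mem_ball_self (by linarith : (0:ℝ) < e0 - ep)))
        intro z hz
        have hz0 : ‖z‖ < e0 := by
          have h1 : dist z y < e0 - ep := mem_ball.mp hz
          calc ‖z‖ = dist z 0 := (dist_zero_right z).symm
            _ ≤ dist z y + dist y 0 := dist_triangle z y 0
            _ < (e0 - ep) + ep := by
                have : dist y 0 ≤ ep := by rwa [dist_zero_right]
                linarith
            _ = e0 := by ring
        rw [hy_eq]
        exact hball0 z (mem_ball_zero_iff.mpr hz0)
      exact hy0 (hcrit y (grad_eq_zero_of_isLocalMax hylm) (le_trans hye hep_le_R))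
    -- Step 2: minimal norm point xb with f ≥ 0 outside the small ball
    set D : Set (EuclideanSpace ℝ (Fin n)) :=
      {y | ep ≤ ‖y‖ ∧ ‖y‖ ≤ R ∧ 0 ≤ evalP f y} with hD_def
    have hDclosed : IsClosed D := by
      apply IsClosed.inter (isClosed_le continuous_const continuous_norm)
      exact IsClosed.inter (isClosed_le continuous_norm continuous_const)
        (isClosed_le continuous_const (continuous_evalP f))
    have hDcompact : IsCompact D :=
      (isCompact_closedBall (0 : EuclideanSpace ℝ (Fin n)) R).of_isClosed_subset hDclosed
        (fun y hy => mem_closedBall_zero_iff.mpr hy.2.1)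
    have hxD : x ∈ D := ⟨by rw [hxnorm]; linarith, le_of_eq hxnorm, hge⟩
    obtain ⟨xb, hxbD, hxbmin⟩ := hDcompact.exists_isMinOn ⟨x, hxD⟩ continuous_norm.continuousOn
    set rs : ℝ := ‖xb‖ with hrs_def
    have hrs_le_R : rs ≤ R := hxbD.2.1
    have hrs_ge_ep : ep ≤ rs := hxbD.1
    have hrs_pos : 0 < rs := lt_of_lt_of_le hep_pos hrs_ge_ep
    have hxb0 : xb ≠ 0 := fun h => by rw [h, norm_zero] at hrs_def; exact hrs_pos.ne' hrs_def
    have hrs_gt_ep : ep < rs := by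
      rcases eq_or_lt_of_le hrs_ge_ep with h | h
      · exfalso
        exact absurd hxbD.2.2 (not_le.mpr (step1 xb hxb0 (le_of_eq h.symm)))
      · exact h
    have hfneg_inside : ∀ y : EuclideanSpace ℝ (Fin n), y ≠ 0 → ‖y‖ < rs → evalP f y < 0 := by
      intro y hy0 hyr
      rcases le_or_gt ‖y‖ ep with h | h
      · exact step1 y hy0 h
      rcases lt_or_ge (evalP f y) 0 with h2 | h2
      · exact h2
      exfalso
      have : y ∈ D := ⟨h.le, le_trans hyr.le hrs_le_R, h2⟩
      have := hxbmin this
      simp only [Set.mem_setOf_eq] at this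
      exact absurd hyr (not_lt.mpr this)
    have hfle_ball : ∀ y ∈ closedBall (0 : EuclideanSpace ℝ (Fin n)) rs, evalP f y ≤ 0 := by
      intro y hy
      by_contra hpos
      push_neg at hpos
      have hy0 : y ≠ 0 := by
        intro h
        rw [h, hf0] at hpos
        exact lt_irrefl 0 hpos
      have hyR : ‖y‖ ≤ rs := mem_closedBall_zero_iff.mp hy
      have hynorm_pos : 0 < ‖y‖ := norm_pos_iff.mpr hy0
      have hc : ContinuousAt (fun s : ℝ => evalP f (s • y)) 1 :=
        ((continuous_evalP f).comp (continuous_id.smul continuous_const)).continuousAt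
      have hc1 : Filter.Tendsto (fun s : ℝ => evalP f (s • y)) (nhds 1)
          (nhds (evalP f y)) := by
        have : evalP f ((1:ℝ) • y) = evalP f y := by rw [one_smul]
        rw [← this]
        exact hc
      have hev : ∀ᶠ s : ℝ in nhds 1, 0 < evalP f (s • y) := hc1 (Ioi_mem_nhds hpos)
      have hev2 : ∀ᶠ s : ℝ in nhdsWithin 1 (Iio 1), 0 < evalP f (s • y) :=
        hev.filter_mono nhdsWithin_le_nhds
      have hev3 : ∀ᶠ s : ℝ in nhdsWithin 1 (Iio 1), (0:ℝ) < s := by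
        apply Filter.eventually_of_mem (Filter.inter_mem self_mem_nhdsWithin
          (nhdsWithin_le_nhds (Ioi_mem_nhds (by norm_num : (0:ℝ) < 1))))
        intro s hs
        exact hs.2
      obtain ⟨s, ⟨hspos, hs0⟩, hs3⟩ := ((hev2.and hev3).and self_mem_nhdsWithin).exists
      have hzn : ‖s • y‖ < rs := by
        rw [norm_smul, Real.norm_eq_abs, abs_of_pos hs0]
        calc s * ‖y‖ < 1 * ‖y‖ := by
              apply mul_lt_mul_of_pos_right _ hynorm_pos
              exact hs3
          _ = ‖y‖ := one_mul _
          _ ≤ rs := hyR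
      have hz0 : s • y ≠ 0 := smul_ne_zero (ne_of_gt hs0) hy0
      exact absurd hspos (not_lt.mpr (hfneg_inside (s • y) hz0 hzn).le)
    have hfxb : evalP f xb = 0 :=
      le_antisymm (hfle_ball xb (mem_closedBall_zero_iff.mpr le_rfl)) hxbD.2.2
    -- Step 3: xb in Gamma with positive multiplier
    obtain ⟨lb, hlb⟩ : ∃ l : ℝ, grad f xb = l • xb := by
      apply mem_Gamma_of_isMaxOn_sphere hrs_pos rfl
      intro y hy
      rw [hfxb]
      exact hfle_ball y (mem_closedBall_zero_iff.mpr hy.le)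
    have hlb0 : lb ≠ 0 := by
      intro h0
      apply hxb0
      apply hcrit xb _ hrs_le_R
      rw [hlb, h0, zero_smul]
    have hψ : HasDerivAt (fun s : ℝ => evalP f (s • xb)) (inner ℝ (grad f xb) xb : ℝ) 1 := by
      have h1 : HasDerivAt (fun s : ℝ => s • xb) xb 1 := by
        simpa using (hasDerivAt_id (1:ℝ)).smul_const xb
      have h2 := hasDerivAt_evalP_comp f h1
      rwa [one_smul] at h2
    have hinner_xb : (inner ℝ (grad f xb) xb : ℝ) = lb * rs ^ 2 := by
      rw [hlb, real_inner_smul_left, real_inner_self_eq_norm_sq]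
    have hlb_pos : 0 < lb := by
      rcases lt_or_gt_of_ne hlb0 with hneg2 | hpos2
      swap
      · exact hpos2
      exfalso
      have hder_neg : (inner ℝ (grad f xb) xb : ℝ) < 0 := by
        rw [hinner_xb]
        have : (0:ℝ) < rs ^ 2 := pow_pos hrs_pos 2
        nlinarith
      have hgt := eventually_gt_left_of_deriv_neg hψ hder_neg
      have hev3 : ∀ᶠ s : ℝ in nhdsWithin 1 (Iio 1), (0:ℝ) < s := by
        apply Filter.eventually_of_mem (Filter.inter_mem self_mem_nhdsWithin
          (nhdsWithin_le_nhds (Ioi_mem_nhds (by norm_num : (0:ℝ) < 1))))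
        intro s hs
        exact hs.2
      obtain ⟨s, ⟨hsgt, hs0⟩, hs3⟩ := ((hgt.and hev3).and self_mem_nhdsWithin).exists
      have h1 : evalP f ((1:ℝ) • xb) = 0 := by rw [one_smul, hfxb]
      rw [h1] at hsgt
      have hzn : ‖s • xb‖ < rs := by
        rw [norm_smul, Real.norm_eq_abs, abs_of_pos hs0]
        calc s * ‖xb‖ < 1 * ‖xb‖ := mul_lt_mul_of_pos_right hs3 hrs_pos
          _ = rs := one_mul _
      have hz0 : s • xb ≠ 0 := smul_ne_zero (ne_of_gt hs0) hxb0
      exact absurd hsgt (not_lt.mpr (hfneg_inside (s • xb) hz0 hzn).le)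
    -- Step 4: the key component lemma
    have hΓclosed : IsClosed (Gamma f) := isClosed_Gamma f hgrad
    have key : ∀ a : ℝ, 0 < a → a ≤ ep →
        ∃ w, w ∈ connectedComponentIn
            (Gamma f ∩ (closedBall (0 : EuclideanSpace ℝ (Fin n)) rs \ ball (0 : EuclideanSpace ℝ (Fin n)) a)) xb ∧
          IsMinOn (evalP f) (connectedComponentIn
            (Gamma f ∩ (closedBall (0 : EuclideanSpace ℝ (Fin n)) rs \ ball (0 : EuclideanSpace ℝ (Fin n)) a)) xb) w ∧ ‖w‖ = a := by
      intro a ha_pos ha_le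
      have ha_lt_rs : a < rs := lt_of_le_of_lt ha_le hrs_gt_ep
      set F : Set (EuclideanSpace ℝ (Fin n)) :=
        Gamma f ∩ (closedBall (0 : EuclideanSpace ℝ (Fin n)) rs \
          ball (0 : EuclideanSpace ℝ (Fin n)) a) with hF_def
      have hFclosed : IsClosed F := by
        rw [hF_def, Set.diff_eq]
        exact hΓclosed.inter (isClosed_closedBall.inter isOpen_ball.isClosed_compl)
      have hFsub_cb : F ⊆ closedBall (0 : EuclideanSpace ℝ (Fin n)) rs := fun y hy => hy.2.1
      have hFcompact : IsCompact F :=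
        (isCompact_closedBall _ _).of_isClosed_subset hFclosed hFsub_cb
      have hxbF : xb ∈ F := by
        refine ⟨⟨lb, hlb⟩, mem_closedBall_zero_iff.mpr le_rfl, fun hb => ?_⟩
        exact absurd (mem_ball_zero_iff.mp hb) (not_lt.mpr ha_lt_rs.le)
      set C := connectedComponentIn F xb with hC_def
      have hCsub : C ⊆ F := connectedComponentIn_subset _ _
      have hxbC : xb ∈ C := mem_connectedComponentIn hxbF
      have hCcompact : IsCompact C := isCompact_connectedComponentIn hFcompact hxbF
      have hCconn : IsPreconnected C := isPreconnected_connectedComponentIn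
      have hmem : ∀ y ∈ C, (∃ l : ℝ, grad f y = l • y) ∧ a ≤ ‖y‖ ∧ ‖y‖ ≤ rs := by
        intro y hy
        obtain ⟨hyΓ, hycb, hynb⟩ := hCsub hy
        refine ⟨hyΓ, ?_, mem_closedBall_zero_iff.mp hycb⟩
        exact not_lt.mp (fun h => hynb (mem_ball_zero_iff.mpr h))
      have hmu : ∀ y ∈ C, 0 < (inner ℝ (grad f y) y : ℝ) := by
        intro y hyC
        by_contra hle
        push_neg at hle
        have hmucont : ContinuousOn
            (fun z : EuclideanSpace ℝ (Fin n) => (inner ℝ (grad f z) z : ℝ)) C :=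
          ((continuous_grad f).inner (𝕜 := ℝ) continuous_id).continuousOn
        have hxbval : 0 < (inner ℝ (grad f xb) xb : ℝ) := by
          rw [hinner_xb]
          exact mul_pos hlb_pos (pow_pos hrs_pos 2)
        have hm := hCconn.intermediate_value hyC hxbC hmucont
        have h0mem : (0:ℝ) ∈ Icc (inner ℝ (grad f y) y : ℝ) (inner ℝ (grad f xb) xb : ℝ) :=
          ⟨hle, hxbval.le⟩
        obtain ⟨z, hzC, hz0⟩ := hm h0mem
        obtain ⟨⟨lz, hlz⟩, hza, hzrs⟩ := hmem z hzC
        have hz_pos : 0 < ‖z‖ := lt_of_lt_of_le ha_pos hza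
        have hzval : (inner ℝ (grad f z) z : ℝ) = lz * ‖z‖ ^ 2 := by
          rw [hlz, real_inner_smul_left, real_inner_self_eq_norm_sq]
        have hlz0 : lz = 0 := by
          have h2 : lz * ‖z‖ ^ 2 = 0 := by rw [← hzval]; exact hz0
          rcases mul_eq_zero.mp h2 with h | h
          · exact h
          · exact absurd h (by positivity)
        have hzz : z = 0 := hcrit z (by rw [hlz, hlz0, zero_smul]) (le_trans hzrs hrs_le_R)
        rw [hzz, norm_zero] at hz_pos
        exact lt_irrefl 0 hz_pos
      obtain ⟨w, hwC, hwmin⟩ :=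
        hCcompact.exists_isMinOn ⟨xb, hxbC⟩ (continuous_evalP f).continuousOn
      obtain ⟨⟨lw', hlw'⟩, hwa, hwrs⟩ := hmem w hwC
      have hw_pos : 0 < ‖w‖ := lt_of_lt_of_le ha_pos hwa
      have hw0 : w ≠ 0 := norm_pos_iff.mp hw_pos
      obtain ⟨O, a', b', tb, φ, hO, hOsub, ha'tb, htbb', hφdiff, hφim, hφtb, hderiv⟩ :=
        hcond w ⟨lw', hlw'⟩ hw0 (by
          have : ‖w‖ ≤ R := le_trans hwrs hrs_le_R
          linarith)
      have htbIoo : tb ∈ Ioo a' b' := ⟨ha'tb, htbb'⟩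
      have hφdiff_tb : DifferentiableAt ℝ φ tb := hφdiff tb htbIoo
      have hφ' : HasDerivAt φ (deriv φ tb) tb := hφdiff_tb.hasDerivAt
      have hh : HasDerivAt (fun t => ‖φ t‖ ^ 2) (2 * (inner ℝ w (deriv φ tb) : ℝ)) tb := by
        have := hφ'.norm_sq
        rwa [hφtb] at this
      have hc_ne : (2:ℝ) * (inner ℝ w (deriv φ tb) : ℝ) ≠ 0 := by
        rw [← hh.deriv]
        exact hderiv
      have hiw_ne : (inner ℝ w (deriv φ tb) : ℝ) ≠ 0 := by
        intro h
        apply hc_ne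
        rw [h, mul_zero]
      have hg : HasDerivAt (fun t => evalP f (φ t))
          (inner ℝ (grad f w) (deriv φ tb) : ℝ) tb := by
        have := hasDerivAt_evalP_comp f hφ'
        rwa [hφtb] at this
      have hlw_pos : 0 < lw' := by
        have h1 := hmu w hwC
        rw [hlw', real_inner_smul_left, real_inner_self_eq_norm_sq] at h1
        nlinarith [pow_pos hw_pos 2]
      have hgval : (inner ℝ (grad f w) (deriv φ tb) : ℝ)
          = lw' * (inner ℝ w (deriv φ tb) : ℝ) := by
        rw [hlw', real_inner_smul_left]
      have hφcont_tb : ContinuousAt φ tb := hφdiff_tb.continuousAt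
      have hnφ : ContinuousAt (fun s => ‖φ s‖) tb := hφcont_tb.norm
      have h1ev : ∀ᶠ s in nhds tb, s ∈ Ioo a' b' :=
        Filter.eventually_of_mem (isOpen_Ioo.mem_nhds htbIoo) (fun s hs => hs)
      rcases eq_or_lt_of_le hwa with heqa | hlta
      · exact ⟨w, hwC, hwmin, heqa.symm⟩
      have h2ev : ∀ᶠ s in nhds tb, a < ‖φ s‖ := by
        apply hnφ (Ioi_mem_nhds ?_)
        show a < ‖φ tb‖
        rw [hφtb]
        exact hlta
      have harc : ∀ t : ℝ,
          (∀ s ∈ uIcc t tb, s ∈ Ioo a' b' ∧ a < ‖φ s‖ ∧ ‖φ s‖ ≤ rs) → φ t ∈ C := by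
        intro t hts
        have hcont : ContinuousOn φ (uIcc t tb) := fun s hs =>
          ((hφdiff s (hts s hs).1).continuousAt).continuousWithinAt
        have hconn2 : IsPreconnected (φ '' uIcc t tb) := isPreconnected_uIcc.image φ hcont
        have himg : φ '' uIcc t tb ⊆ F := by
          rintro z ⟨s, hs, rfl⟩
          obtain ⟨hsIoo, hsa, hsrs⟩ := hts s hs
          refine ⟨?_, mem_closedBall_zero_iff.mpr hsrs, fun hb => ?_⟩
          · have hmem2 : φ s ∈ Gamma f ∩ O := by
              rw [← hφim]
              exact ⟨s, hsIoo, rfl⟩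
            exact hmem2.1
          · exact absurd (mem_ball_zero_iff.mp hb) (not_lt.mpr hsa.le)
        have hwimg : w ∈ φ '' uIcc t tb := ⟨tb, right_mem_uIcc, hφtb⟩
        have hsubC : φ '' uIcc t tb ⊆ connectedComponentIn F w :=
          hconn2.subset_connectedComponentIn hwimg himg
        have hCeq : C = connectedComponentIn F w := connectedComponentIn_eq hwC
        rw [hCeq]
        exact hsubC ⟨t, left_mem_uIcc, rfl⟩
      rcases eq_or_lt_of_le hwrs with heqrs | hltrs
      · -- boundary case : norm of w equals rs
        exfalso
        rcases lt_or_gt_of_ne hiw_ne with hneg2 | hpos2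
        · -- inner < 0 : norm decreases to the right
          have hc2 : 2 * (inner ℝ w (deriv φ tb) : ℝ) < 0 := by linarith
          have hg2 : (inner ℝ (grad f w) (deriv φ tb) : ℝ) < 0 := by
            rw [hgval]
            exact mul_neg_of_pos_of_neg hlw_pos hneg2
          have hE1 := eventually_lt_right_of_deriv_neg hh hc2
          have hE2 := eventually_lt_right_of_deriv_neg hg hg2
          have hE3 : ∀ᶠ s in nhdsWithin tb (Ioi tb), s ∈ Ioo a' b' ∧ a < ‖φ s‖ :=
            (h1ev.and h2ev).filter_mono nhdsWithin_le_nhds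
          obtain ⟨u', hu', hsubI⟩ :=
            mem_nhdsGT_iff_exists_Ioo_subset.mp (hE1.and (hE2.and hE3))
          have hu'2 : tb < u' := mem_Ioi.mp hu'
          set t := (tb + u') / 2 with ht_def
          have htmem : t ∈ Ioo tb u' := by
            rw [Set.mem_Ioo, ht_def]
            constructor <;> linarith
          obtain ⟨hP1, hP2, hP3⟩ := hsubI htmem
          have hφtC : φ t ∈ C := by
            apply harc
            intro s hs
            rw [uIcc_comm, uIcc_of_le htmem.1.le] at hs
            rcases eq_or_lt_of_le hs.1 with hstb | hstb
            · rw [← hstb, hφtb]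
              exact ⟨htbIoo, hlta, heqrs.le⟩
            · have hsI : s ∈ Ioo tb u' := ⟨hstb, lt_of_le_of_lt hs.2 htmem.2⟩
              obtain ⟨q1, q2, q3⟩ := hsubI hsI
              refine ⟨q3.1, q3.2, ?_⟩
              have hq1 : ‖φ s‖ ^ 2 < ‖φ tb‖ ^ 2 := q1
              rw [hφtb, heqrs] at hq1
              nlinarith [norm_nonneg (φ s)]
          have hcon := hwmin hφtC
          simp only [Set.mem_setOf_eq] at hcon
          have hP2' : evalP f (φ t) < evalP f (φ tb) := hP2
          rw [hφtb] at hP2'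
          linarith
        · -- inner > 0 : norm decreases to the left
          have hc2 : 0 < 2 * (inner ℝ w (deriv φ tb) : ℝ) := by linarith
          have hg2 : 0 < (inner ℝ (grad f w) (deriv φ tb) : ℝ) := by
            rw [hgval]
            exact mul_pos hlw_pos hpos2
          have hE1 := eventually_lt_left_of_deriv_pos hh hc2
          have hE2 := eventually_lt_left_of_deriv_pos hg hg2
          have hE3 : ∀ᶠ s in nhdsWithin tb (Iio tb), s ∈ Ioo a' b' ∧ a < ‖φ s‖ :=
            (h1ev.and h2ev).filter_mono nhdsWithin_le_nhds
          obtain ⟨l', hl', hsubI⟩ :=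
            mem_nhdsLT_iff_exists_Ioo_subset.mp (hE1.and (hE2.and hE3))
          have hl'2 : l' < tb := mem_Iio.mp hl'
          set t := (l' + tb) / 2 with ht_def
          have htmem : t ∈ Ioo l' tb := by
            rw [Set.mem_Ioo, ht_def]
            constructor <;> linarith
          obtain ⟨hP1, hP2, hP3⟩ := hsubI htmem
          have hφtC : φ t ∈ C := by
            apply harc
            intro s hs
            rw [uIcc_of_le htmem.2.le] at hs
            rcases eq_or_lt_of_le hs.2 with hstb | hstb
            · rw [hstb, hφtb]
              exact ⟨htbIoo, hlta, heqrs.le⟩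
            · have hsI : s ∈ Ioo l' tb := ⟨lt_of_lt_of_le htmem.1 hs.1, hstb⟩
              obtain ⟨q1, q2, q3⟩ := hsubI hsI
              refine ⟨q3.1, q3.2, ?_⟩
              have hq1 : ‖φ s‖ ^ 2 < ‖φ tb‖ ^ 2 := q1
              rw [hφtb, heqrs] at hq1
              nlinarith [norm_nonneg (φ s)]
          have hcon := hwmin hφtC
          simp only [Set.mem_setOf_eq] at hcon
          have hP2' : evalP f (φ t) < evalP f (φ tb) := hP2
          rw [hφtb] at hP2'
          linarith
      · -- interior case
        exfalso
        have h3ev : ∀ᶠ s in nhds tb, ‖φ s‖ < rs := by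
          apply hnφ (Iio_mem_nhds ?_)
          show ‖φ tb‖ < rs
          rw [hφtb]
          exact hltrs
        obtain ⟨δ, hδpos, hδ⟩ := Metric.eventually_nhds_iff.mp (h1ev.and (h2ev.and h3ev))
        have hevn : ∀ᶠ t in nhds tb, φ t ∈ C := by
          apply Metric.eventually_nhds_iff.mpr ⟨δ, hδpos, ?_⟩
          intro t ht
          apply harc
          intro s hs
          have hds : dist s tb < δ := by
            have h5 : dist s tb ≤ dist t tb := by
              rw [Real.dist_eq, Real.dist_eq]
              rcases le_total t tb with h | h
              · rw [uIcc_of_le h] at hs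
                obtain ⟨h6, h7⟩ := hs
                rw [abs_of_nonpos (by linarith), abs_of_nonpos (by linarith)]
                linarith
              · rw [uIcc_of_ge h] at hs
                obtain ⟨h6, h7⟩ := hs
                rw [abs_of_nonneg (by linarith), abs_of_nonneg (by linarith)]
                linarith
            exact lt_of_le_of_lt h5 ht
          obtain ⟨q1, q2, q3⟩ := hδ hds
          exact ⟨q1, q2, q3.le⟩
        have hlocmin : IsLocalMin (fun t => evalP f (φ t)) tb := by
          filter_upwards [hevn] with t htC
          have hcon := hwmin htC
          simp only [Set.mem_setOf_eq] at hcon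
          show evalP f (φ tb) ≤ evalP f (φ t)
          rw [hφtb]
          exact hcon
        have hd0 := hlocmin.deriv_eq_zero
        rw [hg.deriv, hgval] at hd0
        exact hiw_ne ((mul_eq_zero.mp hd0).resolve_left (ne_of_gt hlw_pos))
    -- Step 5: conclusion
    obtain ⟨we, hweC, hwemin, hwenorm⟩ := key ep hep_pos le_rfl
    have hwe0 : we ≠ 0 := by
      intro h
      rw [h, norm_zero] at hwenorm
      exact hep_pos.ne' hwenorm.symm
    have hfwe : evalP f we < 0 := step1 we hwe0 (le_of_eq hwenorm)
    obtain ⟨eta, heta_pos, heta⟩ := Metric.continuousAt_iff.mp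
      (continuous_evalP f).continuousAt (-(evalP f we)) (by linarith)
    set a : ℝ := min (eta / 2) ep with ha_def
    have ha_pos : 0 < a := lt_min (by linarith) hep_pos
    have ha_le_ep : a ≤ ep := min_le_right _ _
    obtain ⟨wa, hwaC, hwamin, hwanorm⟩ := key a ha_pos ha_le_ep
    have hsub : (Gamma f ∩ (closedBall (0 : EuclideanSpace ℝ (Fin n)) rs \ ball (0 : EuclideanSpace ℝ (Fin n)) ep)) ⊆
        (Gamma f ∩ (closedBall (0 : EuclideanSpace ℝ (Fin n)) rs \ ball (0 : EuclideanSpace ℝ (Fin n)) a)) :=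
      Set.inter_subset_inter_right _ (Set.diff_subset_diff_right (ball_subset_ball ha_le_ep))
    have hweCa : we ∈ connectedComponentIn
        (Gamma f ∩ (closedBall (0 : EuclideanSpace ℝ (Fin n)) rs \ ball (0 : EuclideanSpace ℝ (Fin n)) a)) xb :=
      connectedComponentIn_mono xb hsub hweC
    have h1 : evalP f wa ≤ evalP f we := by
      have := hwamin hweCa
      simpa only [Set.mem_setOf_eq] using this
    have h2 : dist (evalP f wa) (evalP f 0) < -(evalP f we) := by
      apply heta
      rw [dist_zero_right, hwanorm]
      calc a ≤ eta / 2 := min_le_left _ _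
        _ < eta := by linarith
    rw [hf0, Real.dist_eq, sub_zero] at h2
    have h3 : -(evalP f wa) ≤ |evalP f wa| := neg_le_abs _
    linarith
  · intro hneg
    have hball : ∀ y ∈ closedBall (0 : EuclideanSpace ℝ (Fin n)) R, evalP f y ≤ 0 := by
      obtain ⟨z, hzmem, hzmax⟩ := (isCompact_closedBall (0 : EuclideanSpace ℝ (Fin n)) R).exists_isMaxOn
        ⟨0, mem_closedBall_self hR.le⟩ ((continuous_evalP f).continuousOn)
      by_cases hlt : ‖z‖ < R
      · have hz0 : grad f z = 0 := by
          apply grad_eq_zero_of_isMaxOn_mem_interior hzmax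
          exact Filter.mem_of_superset (isOpen_ball.mem_nhds (mem_ball_zero_iff.mpr hlt))
            ball_subset_closedBall
        have hz00 : z = 0 := hcrit z hz0 (mem_closedBall_zero_iff.mp hzmem)
        intro y hy
        calc evalP f y ≤ evalP f z := hzmax hy
          _ = 0 := by rw [hz00, hf0]
      · have hnorm : ‖z‖ = R := le_antisymm (mem_closedBall_zero_iff.mp hzmem) (not_lt.mp hlt)
        have hzΓ : ∃ l : ℝ, grad f z = l • z := by
          apply mem_Gamma_of_isMaxOn_sphere hR hnorm
          intro y hy
          exact hzmax (mem_closedBall_zero_iff.mpr hy.le)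
        have h1 : evalP f z < 0 := hneg z ⟨hzΓ, mem_sphere_zero_iff_norm.mpr hnorm⟩
        have h2 : (0:ℝ) ≤ evalP f z := by
          have := hzmax (mem_closedBall_self hR.le)
          simp only [Set.mem_setOf_eq] at this
          rwa [hf0] at this
        linarith
    apply Filter.eventually_of_mem (isOpen_ball.mem_nhds (mem_ball_self hR))
    intro y hy
    rw [hf0]
    exact hball y (ball_subset_closedBall hy)
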